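/- arXiv:1901.06356 — 3 statements merged into one kernel-verified Lean document; each statement's English description precedes it below -/
import Mathlib

section
/- The spectral norm of T satisfies ‖T‖₂ ≤ 4/h², where h = min{h_j : j = 0,…,N}; equivalently, ‖T‖₂ ≤ max_{j=0,…,N} 4/h_j². -/
open Matrix
open scoped Kronecker

noncomputable section

namespace Kawarada

/-- The spectral norm (largest singular value) of a real matrix:
the operator norm of the induced map between Euclidean spaces. -/
noncomputable def specNorm {m : Type*} [Fintype m] [DecidableEq m]
    (A : Matrix m m ℝ) : ℝ :=
  ‖LinearMap.toContinuousLinearMap (Matrix.toEuclideanLin A)‖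

/-- The `N × N` tridiagonal matrix `T` built from mesh steps `h 0, …, h N`.
Lean row/column index `i : Fin N` corresponds to the paper's index `i + 1`. -/
noncomputable def tridiag (N : ℕ) (h : ℕ → ℝ) : Matrix (Fin N) (Fin N) ℝ :=
  Matrix.of fun i p =>
    if (i : ℕ) = (p : ℕ) then -2 / (h i * h ((i : ℕ) + 1))
    else if (i : ℕ) = (p : ℕ) + 1 then 2 / (h i * (h i + h ((i : ℕ) + 1)))
    else if (p : ℕ) = (i : ℕ) + 1 then 2 / (h ((i : ℕ) + 1) * (h i + h ((i : ℕ) + 1)))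
    else 0

/-- `φ_{i,j,k}` for the paper's indices `i,j,k ≥ 1`. -/
noncomputable def phi (a b c q : ℝ) (h1 h2 h3 : ℕ → ℝ) (i j k : ℕ) : ℝ :=
  (a ^ 2 * (∑ ℓ ∈ Finset.range i, h1 ℓ) ^ 2 +
      b ^ 2 * (∑ ℓ ∈ Finset.range j, h2 ℓ) ^ 2 +
      c ^ 2 * (∑ ℓ ∈ Finset.range k, h3 ℓ) ^ 2) ^ (q / 2)

/-- Index type for the vectorization: `i` (the `Fin N1` component) varies fastest. -/
abbrev Idx (N1 N2 N3 : ℕ) := Fin N3 × Fin N2 × Fin N1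

/-- `φ` as a function of the vectorized index. -/
noncomputable def phiVec (N1 N2 N3 : ℕ) (a b c q : ℝ) (h1 h2 h3 : ℕ → ℝ)
    (p : Idx N1 N2 N3) : ℝ :=
  phi a b c q h1 h2 h3 ((p.2.2 : ℕ) + 1) ((p.2.1 : ℕ) + 1) ((p.1 : ℕ) + 1)

/-- The diagonal matrix `B` with entries `φ_{i,j,k}⁻¹`. -/
noncomputable def Bdiag (N1 N2 N3 : ℕ) (a b c q : ℝ) (h1 h2 h3 : ℕ → ℝ) :
    Matrix (Idx N1 N2 N3) (Idx N1 N2 N3) ℝ :=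
  Matrix.diagonal fun p => (phiVec N1 N2 N3 a b c q h1 h2 h3 p)⁻¹

/-- The matrices `M1, M2, M3`. -/
noncomputable def Mmat (N1 N2 N3 : ℕ) (a b c q : ℝ) (h1 h2 h3 : ℕ → ℝ) :
    Fin 3 → Matrix (Idx N1 N2 N3) (Idx N1 N2 N3) ℝ :=
  ![(a ^ 2)⁻¹ •
      (Bdiag N1 N2 N3 a b c q h1 h2 h3 *
        ((1 : Matrix (Fin N3) (Fin N3) ℝ) ⊗ₖ
          ((1 : Matrix (Fin N2) (Fin N2) ℝ) ⊗ₖ tridiag N1 h1))),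
    (b ^ 2)⁻¹ •
      (Bdiag N1 N2 N3 a b c q h1 h2 h3 *
        ((1 : Matrix (Fin N3) (Fin N3) ℝ) ⊗ₖ
          (tridiag N2 h2 ⊗ₖ (1 : Matrix (Fin N1) (Fin N1) ℝ)))),
    (c ^ 2)⁻¹ •
      (Bdiag N1 N2 N3 a b c q h1 h2 h3 *
        (tridiag N3 h3 ⊗ₖ
          ((1 : Matrix (Fin N2) (Fin N2) ℝ) ⊗ₖ (1 : Matrix (Fin N1) (Fin N1) ℝ))))]

/-- The minimum of the mesh steps `h σ j`, `j = 0, …, N`, in one direction. -/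
noncomputable def dirMin (N : ℕ) (h : ℕ → ℝ) : ℝ :=
  (Finset.range (N + 1)).inf' Finset.nonempty_range_add_one h

/-- The maximum of the mesh steps in one direction. -/
noncomputable def dirMax (N : ℕ) (h : ℕ → ℝ) : ℝ :=
  (Finset.range (N + 1)).sup' Finset.nonempty_range_add_one h

/-- `h = min{h_{σ,j}}`, the global minimal mesh step. -/
noncomputable def meshMin (N1 N2 N3 : ℕ) (h1 h2 h3 : ℕ → ℝ) : ℝ :=
  min (dirMin N1 h1) (min (dirMin N2 h2) (dirMin N3 h3))

/-- `H = max{h_{σ,j}}`, the global maximal mesh step. -/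
noncomputable def meshMax (N1 N2 N3 : ℕ) (h1 h2 h3 : ℕ → ℝ) : ℝ :=
  max (dirMax N1 h1) (max (dirMax N2 h2) (dirMax N3 h3))

/-- `β_min = (h²/2)(a² h_{1,0}² + b² h_{2,0}² + c² h_{3,0}²)^{q/2}`. -/
noncomputable def betaMin (N1 N2 N3 : ℕ) (a b c q : ℝ) (h1 h2 h3 : ℕ → ℝ) : ℝ :=
  meshMin N1 N2 N3 h1 h2 h3 ^ 2 / 2 *
    (a ^ 2 * h1 0 ^ 2 + b ^ 2 * h2 0 ^ 2 + c ^ 2 * h3 0 ^ 2) ^ (q / 2)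

/-- The CFL condition `τ/β_min < min{a², b², c²}`. -/
def CFL (N1 N2 N3 : ℕ) (a b c q : ℝ) (h1 h2 h3 : ℕ → ℝ) (τ : ℝ) : Prop :=
  τ / betaMin N1 N2 N3 a b c q h1 h2 h3 < min (a ^ 2) (min (b ^ 2) (c ^ 2))

/-- `φ_min = min φ_{i,j,k}` (for the grid-sizes `nσ + 2 ≥ 2`). -/
noncomputable def phiMin (n1 n2 n3 : ℕ) (a b c q : ℝ) (h1 h2 h3 : ℕ → ℝ) : ℝ :=
  Finset.univ.inf' Finset.univ_nonempty
    (phiVec (n1 + 2) (n2 + 2) (n3 + 2) a b c q h1 h2 h3)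

/-- The nonlinear source term `g`, acting componentwise: `g(v)_p = f(v_p)/φ_p`. -/
noncomputable def gvec (N1 N2 N3 : ℕ) (a b c q : ℝ) (h1 h2 h3 : ℕ → ℝ) (f : ℝ → ℝ)
    (v : Idx N1 N2 N3 → ℝ) : Idx N1 N2 N3 → ℝ :=
  fun p => f (v p) / phiVec N1 N2 N3 a b c q h1 h2 h3 p

/-- The LOD propagator
`Φ(τ) = ∏_{σ=1}^3 (I − (τ/2)M_σ)⁻¹ (I + (τ/2)M_σ)`. -/
noncomputable def Phi (N1 N2 N3 : ℕ) (a b c q : ℝ) (h1 h2 h3 : ℕ → ℝ) (τ : ℝ) :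
    Matrix (Idx N1 N2 N3) (Idx N1 N2 N3) ℝ :=
  (1 - (τ / 2) • Mmat N1 N2 N3 a b c q h1 h2 h3 0)⁻¹ *
    (1 + (τ / 2) • Mmat N1 N2 N3 a b c q h1 h2 h3 0) *
  ((1 - (τ / 2) • Mmat N1 N2 N3 a b c q h1 h2 h3 1)⁻¹ *
    (1 + (τ / 2) • Mmat N1 N2 N3 a b c q h1 h2 h3 1)) *
  ((1 - (τ / 2) • Mmat N1 N2 N3 a b c q h1 h2 h3 2)⁻¹ *
    (1 + (τ / 2) • Mmat N1 N2 N3 a b c q h1 h2 h3 2))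

theorem isHermitian_symPart {m : Type*} [Fintype m] (A : Matrix m m ℝ) :
    (((2 : ℝ)⁻¹ • (A + Aᵀ))).IsHermitian := by
  show _ᴴ = _
  ext i j
  simp [Matrix.conjTranspose_apply, Matrix.transpose_apply, Matrix.add_apply]
  ring

/-- The logarithmic norm associated with the spectral norm:
`μ(A) = λ_max((A + Aᵀ)/2)`. -/
noncomputable def logNorm {m : Type*} [Fintype m] [DecidableEq m]
    (A : Matrix m m ℝ) : ℝ :=
  ⨆ i, (isHermitian_symPart A).eigenvalues i

/-- The Euclidean (`ℓ²`) norm of a vector. -/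
noncomputable def vecNorm {m : Type*} [Fintype m] (x : m → ℝ) : ℝ :=
  Real.sqrt (∑ i, x i ^ 2)


lemma specNorm_le_of_sums {m : Type*} [Fintype m] [DecidableEq m]
    (A : Matrix m m ℝ) (K : ℝ) (hK : 0 ≤ K)
    (hrow : ∀ i, ∑ j, |A i j| ≤ K) (hcol : ∀ j, ∑ i, |A i j| ≤ K) :
    specNorm A ≤ K := by
  refine ContinuousLinearMap.opNorm_le_bound _ hK ?_
  intro x
  have key : ∑ i, (∑ j, A i j * x j) ^ 2 ≤ K ^ 2 * ∑ j, (x j) ^ 2 := by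
    have step1 : ∀ i, (∑ j, A i j * x j) ^ 2 ≤
        (∑ j, |A i j|) * (∑ j, |A i j| * (x j) ^ 2) := by
      intro i
      calc (∑ j, A i j * x j) ^ 2 ≤ (∑ j, |A i j| * |x j|) ^ 2 := by
            rw [← sq_abs (∑ j, A i j * x j)]
            refine pow_le_pow_left₀ (abs_nonneg _) ?_ 2
            refine (Finset.abs_sum_le_sum_abs _ _).trans ?_
            simp [abs_mul, le_refl]
        _ ≤ (∑ j, |A i j|) * (∑ j, |A i j| * (x j) ^ 2) := by
            refine Finset.sum_sq_le_sum_mul_sum_of_sq_eq_mul _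
              (fun _ _ => abs_nonneg _)
              (fun _ _ => mul_nonneg (abs_nonneg _) (sq_nonneg _)) ?_
            intro j _
            rw [mul_pow, sq_abs (x j), sq]
            ring
    calc ∑ i, (∑ j, A i j * x j) ^ 2
        ≤ ∑ i, K * (∑ j, |A i j| * (x j) ^ 2) := by
          refine Finset.sum_le_sum fun i _ => (step1 i).trans ?_
          refine mul_le_mul_of_nonneg_right (hrow i) ?_
          exact Finset.sum_nonneg fun j _ => mul_nonneg (abs_nonneg _) (sq_nonneg _)
      _ = K * ∑ j, (∑ i, |A i j|) * (x j) ^ 2 := by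
          rw [← Finset.mul_sum, Finset.sum_comm]
          simp_rw [Finset.sum_mul]
      _ ≤ K * ∑ j, K * (x j) ^ 2 := by
          refine mul_le_mul_of_nonneg_left ?_ hK
          exact Finset.sum_le_sum fun j _ =>
            mul_le_mul_of_nonneg_right (hcol j) (sq_nonneg _)
      _ = K ^ 2 * ∑ j, (x j) ^ 2 := by rw [← Finset.mul_sum]; ring
  have hAx : (LinearMap.toContinuousLinearMap (Matrix.toEuclideanLin A)) x =
      (WithLp.equiv 2 (m → ℝ)).symm (A *ᵥ (WithLp.equiv 2 (m → ℝ)) x) := by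
    simp [Matrix.toEuclideanLin_apply]
  rw [hAx]
  rw [EuclideanSpace.norm_eq, EuclideanSpace.norm_eq]
  have : ∀ i, ((WithLp.equiv 2 (m → ℝ)).symm (A *ᵥ (WithLp.equiv 2 (m → ℝ)) x)) i
      = ∑ j, A i j * x j := fun i => by
    simp [Matrix.mulVec, dotProduct]
  simp_rw [this, Real.norm_eq_abs, sq_abs]
  rw [← Real.sqrt_sq hK, ← Real.sqrt_mul (sq_nonneg K)]
  exact Real.sqrt_le_sqrt (by simpa using key)

lemma sum_ite_le {N : ℕ} (P : Fin N → Prop) [DecidablePred P] (c : ℝ) (hc : 0 ≤ c)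
    (hP : ∀ p q, P p → P q → p = q) :
    (∑ p : Fin N, if P p then c else 0) ≤ c := by
  rw [Finset.sum_ite, Finset.sum_const, Finset.sum_const_zero, add_zero]
  have hcard : (Finset.univ.filter P).card ≤ 1 :=
    Finset.card_le_one.2 fun a ha b hb =>
      hP a b (Finset.mem_filter.1 ha).2 (Finset.mem_filter.1 hb).2
  calc (Finset.univ.filter P).card • c ≤ 1 • c := by
        exact nsmul_le_nsmul_left hc hcard
    _ = c := one_smul _ _

lemma tridiag_entry_bound (N : ℕ) (h : ℕ → ℝ) (hpos : ∀ j ≤ N, 0 < h j)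
    (hN : 1 ≤ N) (i p : Fin N) :
    |tridiag N h i p| ≤
      (if (i : ℕ) = (p : ℕ) then 2 / dirMin N h ^ 2
       else if (i : ℕ) = (p : ℕ) + 1 then 1 / dirMin N h ^ 2
       else if (p : ℕ) = (i : ℕ) + 1 then 1 / dirMin N h ^ 2 else 0) := by
  set d := dirMin N h with hd
  obtain ⟨j0, hj0, hj0e⟩ := Finset.exists_mem_eq_inf' (Finset.nonempty_range_add_one (n := N)) h
  have hdpos : 0 < d := by
    have : d = h j0 := by rw [hd]; unfold dirMin; exact hj0e
    rw [this]; exact hpos j0 (Nat.lt_succ_iff.1 (Finset.mem_range.1 hj0))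
  have hle : ∀ j ≤ N, d ≤ h j := fun j hj =>
    Finset.inf'_le h (Finset.mem_range.2 (Nat.lt_succ_of_le hj))
  have hi1 : d ≤ h i := hle i (le_of_lt i.2)
  have hi2 : d ≤ h ((i : ℕ) + 1) := hle _ i.2
  have h1pos : 0 < h i := lt_of_lt_of_le hdpos hi1
  have h2pos : 0 < h ((i : ℕ) + 1) := lt_of_lt_of_le hdpos hi2
  unfold tridiag
  simp only [Matrix.of_apply]
  split_ifs with e1 e2 e3
  · rw [neg_div, abs_neg, abs_of_nonneg (by positivity)]
    rw [sq]
    gcongr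
  · rw [abs_of_nonneg (by positivity)]
    have key : (1:ℝ) / d ^ 2 = 2 / (d * (d + d)) := by field_simp; ring
    rw [key]
    gcongr
    all_goals first | exact hi1 | exact hi2 | linarith
  · rw [abs_of_nonneg (by positivity)]
    have key : (1:ℝ) / d ^ 2 = 2 / (d * (d + d)) := by field_simp; ring
    rw [key]
    gcongr
    all_goals first | exact hi1 | exact hi2 | linarith
  · simp

lemma dirMin_pos (N : ℕ) (h : ℕ → ℝ) (hpos : ∀ j ≤ N, 0 < h j) : 0 < dirMin N h := by
  obtain ⟨j0, hj0, hj0e⟩ := Finset.exists_mem_eq_inf' (Finset.nonempty_range_add_one (n := N)) h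
  unfold dirMin
  rw [hj0e]
  exact hpos j0 (Nat.lt_succ_iff.1 (Finset.mem_range.1 hj0))

lemma bound_split (N : ℕ) (d : ℝ) (hd : 0 < d) (i p : Fin N) :
    (if (i : ℕ) = (p : ℕ) then 2 / d ^ 2
       else if (i : ℕ) = (p : ℕ) + 1 then 1 / d ^ 2
       else if (p : ℕ) = (i : ℕ) + 1 then 1 / d ^ 2 else 0) ≤
    (if (i : ℕ) = (p : ℕ) then 2 / d ^ 2 else 0) +
      ((if (i : ℕ) = (p : ℕ) + 1 then 1 / d ^ 2 else 0) +
       (if (p : ℕ) = (i : ℕ) + 1 then 1 / d ^ 2 else 0)) := by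
  have h1 : (0:ℝ) ≤ 1 / d ^ 2 := by positivity
  have h2 : (0:ℝ) ≤ 2 / d ^ 2 := by positivity
  split_ifs <;> linarith

lemma tridiag_row_sum (N : ℕ) (h : ℕ → ℝ) (hpos : ∀ j ≤ N, 0 < h j) (hN : 1 ≤ N)
    (i : Fin N) : ∑ p, |tridiag N h i p| ≤ 4 / dirMin N h ^ 2 := by
  set d := dirMin N h with hd
  have hdpos : 0 < d := dirMin_pos N h hpos
  have h1 : (0:ℝ) ≤ 1 / d ^ 2 := by positivity
  have h2 : (0:ℝ) ≤ 2 / d ^ 2 := by positivity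
  calc ∑ p, |tridiag N h i p|
      ≤ ∑ p : Fin N, ((if (i : ℕ) = (p : ℕ) then 2 / d ^ 2 else 0) +
        ((if (i : ℕ) = (p : ℕ) + 1 then 1 / d ^ 2 else 0) +
         (if (p : ℕ) = (i : ℕ) + 1 then 1 / d ^ 2 else 0))) :=
        Finset.sum_le_sum fun p _ =>
          (tridiag_entry_bound N h hpos hN i p).trans (bound_split N d hdpos i p)
    _ ≤ 2 / d ^ 2 + (1 / d ^ 2 + 1 / d ^ 2) := by
        rw [Finset.sum_add_distrib, Finset.sum_add_distrib]
        gcongr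
        · exact sum_ite_le _ _ h2 fun p q hp hq => Fin.ext (by omega)
        · exact sum_ite_le _ _ h1 fun p q hp hq => Fin.ext (by omega)
        · exact sum_ite_le _ _ h1 fun p q hp hq => Fin.ext (by omega)
    _ = 4 / d ^ 2 := by ring

lemma tridiag_col_sum (N : ℕ) (h : ℕ → ℝ) (hpos : ∀ j ≤ N, 0 < h j) (hN : 1 ≤ N)
    (p : Fin N) : ∑ i, |tridiag N h i p| ≤ 4 / dirMin N h ^ 2 := by
  set d := dirMin N h with hd
  have hdpos : 0 < d := dirMin_pos N h hpos
  have h1 : (0:ℝ) ≤ 1 / d ^ 2 := by positivity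
  have h2 : (0:ℝ) ≤ 2 / d ^ 2 := by positivity
  calc ∑ i, |tridiag N h i p|
      ≤ ∑ i : Fin N, ((if (i : ℕ) = (p : ℕ) then 2 / d ^ 2 else 0) +
        ((if (i : ℕ) = (p : ℕ) + 1 then 1 / d ^ 2 else 0) +
         (if (p : ℕ) = (i : ℕ) + 1 then 1 / d ^ 2 else 0))) :=
        Finset.sum_le_sum fun i _ =>
          (tridiag_entry_bound N h hpos hN i p).trans (bound_split N d hdpos i p)
    _ ≤ 2 / d ^ 2 + (1 / d ^ 2 + 1 / d ^ 2) := by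
        rw [Finset.sum_add_distrib, Finset.sum_add_distrib]
        gcongr
        · exact sum_ite_le _ _ h2 fun a b ha hb => Fin.ext (by omega)
        · exact sum_ite_le _ _ h1 fun a b ha hb => Fin.ext (by omega)
        · exact sum_ite_le _ _ h1 fun a b ha hb => Fin.ext (by omega)
    _ = 4 / d ^ 2 := by ring

/-- `‖T‖₂ ≤ 4/h²` where `h = min h_j`; equivalently
`‖T‖₂ ≤ max_j 4/h_j²`. -/
theorem statement0 (N : ℕ) (hN : 2 ≤ N) (h : ℕ → ℝ) (hpos : ∀ j ≤ N, 0 < h j) :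
    specNorm (tridiag N h) ≤ 4 / dirMin N h ^ 2 ∧
      specNorm (tridiag N h) ≤
        (Finset.range (N + 1)).sup' Finset.nonempty_range_add_one (fun j => 4 / h j ^ 2) := by
  have hN1 : 1 ≤ N := le_trans (by norm_num) hN
  have hdpos : 0 < dirMin N h := dirMin_pos N h hpos
  have main : specNorm (tridiag N h) ≤ 4 / dirMin N h ^ 2 := by
    refine specNorm_le_of_sums _ _ (by positivity) ?_ ?_
    · exact tridiag_row_sum N h hpos hN1
    · exact tridiag_col_sum N h hpos hN1
  refine ⟨main, main.trans ?_⟩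
  obtain ⟨j0, hj0, hj0e⟩ := Finset.exists_mem_eq_inf' (Finset.nonempty_range_add_one (n := N)) h
  have hde : dirMin N h = h j0 := hj0e
  rw [hde]
  exact Finset.le_sup' (fun j => 4 / h j ^ 2) hj0

end Kawarada
end
end

section
/- If τ > 0 satisfies the CFL condition, then for each σ = 1, 2, 3 the matrix I − (τ/2)M_σ is nonsingular and monotone: whenever (I − (τ/2)M_σ)x ≥ 0 entrywise for a vector x, then x ≥ 0 entrywise; equivalently, every entry of (I − (τ/2)M_σ)^{−1} is nonnegative. -/
open Matrix
open scoped Kronecker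

noncomputable section

namespace Kawarada

/-! ### Auxiliary lemmas for Statement 3 -/

theorem kaw_mmatrix_pkg {m : Type*} [Fintype m] [DecidableEq m] (A : Matrix m m ℝ)
    (hoff : ∀ p r, p ≠ r → A p r ≤ 0) (hrow : ∀ p, 0 < ∑ r, A p r) :
    IsUnit A ∧ (∀ x : m → ℝ, (∀ p, 0 ≤ A.mulVec x p) → ∀ p, 0 ≤ x p) ∧
      ∀ p r, 0 ≤ A⁻¹ p r := by
  have mono : ∀ x : m → ℝ, (∀ p, 0 ≤ A.mulVec x p) → ∀ p, 0 ≤ x p := by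
    intro x hx p
    by_contra hneg
    push_neg at hneg
    obtain ⟨p0, -, hp0⟩ := Finset.exists_min_image Finset.univ x ⟨p, Finset.mem_univ p⟩
    have hxp0 : x p0 < 0 := lt_of_le_of_lt (hp0 p (Finset.mem_univ p)) hneg
    have key : A.mulVec x p0 ≤ (∑ r, A p0 r) * x p0 := by
      rw [Matrix.mulVec, dotProduct, Finset.sum_mul]
      refine Finset.sum_le_sum fun r _ => ?_
      by_cases hr : r = p0
      · subst hr; exact le_rfl
      · exact mul_le_mul_of_nonpos_left (hp0 r (Finset.mem_univ r))
          (hoff p0 r (Ne.symm hr))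
    have hneg2 : (∑ r, A p0 r) * x p0 < 0 := mul_neg_of_pos_of_neg (hrow p0) hxp0
    linarith [hx p0]
  have hinj : Function.Injective A.mulVec := by
    intro x y hxy
    have hz : ∀ z : m → ℝ, A.mulVec z = 0 → z = 0 := by
      intro z hz
      have hz1 : ∀ p, 0 ≤ z p := mono z (by intro p; rw [hz]; simp)
      have hz2 : ∀ p, 0 ≤ (-z) p := mono (-z) (by
        intro p
        rw [Matrix.mulVec_neg, hz]; simp)
      funext p
      have ha1 := hz1 p; have ha2 := hz2 p
      simp only [Pi.neg_apply] at ha2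
      show z p = 0
      linarith
    have := hz (x - y) (by rw [Matrix.mulVec_sub, hxy, sub_self])
    exact sub_eq_zero.mp this
  have hu : IsUnit A := Matrix.mulVec_injective_iff_isUnit.mp hinj
  refine ⟨hu, mono, fun p r => ?_⟩
  have hAA : A * A⁻¹ = 1 := Matrix.mul_nonsing_inv A (A.isUnit_iff_isUnit_det.mp hu)
  have := mono (A⁻¹.mulVec (Pi.single r 1)) (by
    intro s
    rw [Matrix.mulVec_mulVec, hAA]
    simp only [Matrix.one_mulVec]
    by_cases hs : s = r
    · subst hs; simp
    · simp [Pi.single_apply, hs]) p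
  simpa [Matrix.mulVec_single] using this

theorem kaw_tridiag_offdiag_nonneg (N : ℕ) (h : ℕ → ℝ) (hpos : ∀ j ≤ N, 0 < h j)
    (i p : Fin N) (hip : i ≠ p) : 0 ≤ tridiag N h i p := by
  have hvi : (i : ℕ) < N := i.2
  have h0 : 0 < h i := hpos i (le_of_lt hvi)
  have h1 : 0 < h ((i : ℕ) + 1) := hpos _ hvi
  have hne : (i : ℕ) ≠ (p : ℕ) := fun he => hip (Fin.ext he)
  simp only [tridiag, Matrix.of_apply, if_neg hne]
  split_ifs <;> positivity

theorem kaw_sum_ite_val {N : ℕ} (k : ℕ) (v : ℝ) :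
    ∑ p : Fin N, (if (p : ℕ) = k then v else 0) = if k < N then v else 0 := by
  by_cases hk : k < N
  · rw [if_pos hk, Finset.sum_eq_single (⟨k, hk⟩ : Fin N)]
    · simp
    · intro b _ hb
      rw [if_neg]
      exact fun hbv => hb (Fin.ext hbv)
    · simp
  · rw [if_neg hk]
    refine Finset.sum_eq_zero fun p _ => ?_
    rw [if_neg]
    have := p.2
    omega

theorem kaw_tridiag_rowsum_nonpos (N : ℕ) (h : ℕ → ℝ) (hpos : ∀ j ≤ N, 0 < h j)
    (i : Fin N) : ∑ p, tridiag N h i p ≤ 0 := by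
  have hvi : (i : ℕ) < N := i.2
  have h0 : 0 < h i := hpos i (le_of_lt hvi)
  have h1 : 0 < h ((i : ℕ) + 1) := hpos _ hvi
  set l : ℝ := 2 / (h i * (h i + h ((i : ℕ) + 1))) with hl
  set r : ℝ := 2 / (h ((i : ℕ) + 1) * (h i + h ((i : ℕ) + 1))) with hr
  set d : ℝ := -2 / (h i * h ((i : ℕ) + 1)) with hd
  have hlpos : 0 ≤ l := by rw [hl]; positivity
  have hrpos : 0 ≤ r := by rw [hr]; positivity
  have hpt : ∀ p : Fin N, tridiag N h i p =
      (if (p : ℕ) = (i : ℕ) then d else 0) +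
      ((if (p : ℕ) + 1 = (i : ℕ) then l else 0) +
      (if (p : ℕ) = (i : ℕ) + 1 then r else 0)) := by
    intro p
    simp only [tridiag, Matrix.of_apply]
    split_ifs <;> first | omega | ring1
  rw [Finset.sum_congr rfl fun p _ => hpt p, Finset.sum_add_distrib,
    Finset.sum_add_distrib, kaw_sum_ite_val, kaw_sum_ite_val, if_pos hvi]
  have hL : ∑ p : Fin N, (if (p : ℕ) + 1 = (i : ℕ) then l else 0) ≤ l ∧
      0 ≤ ∑ p : Fin N, (if (p : ℕ) + 1 = (i : ℕ) then l else 0) := by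
    rcases Nat.eq_zero_or_pos (i : ℕ) with h0i | h0i
    · rw [Finset.sum_eq_zero fun p _ => by rw [if_neg]; omega]
      exact ⟨hlpos, le_refl 0⟩
    · obtain ⟨mm, hm⟩ : ∃ mm, (i : ℕ) = mm + 1 := ⟨(i : ℕ) - 1, by omega⟩
      have hcond : ∀ p : Fin N, ((p : ℕ) + 1 = (i : ℕ)) = ((p : ℕ) = mm) := by
        intro p
        exact propext ⟨fun hp => by omega, fun hp => by omega⟩
      simp only [hcond, kaw_sum_ite_val]
      split_ifs
      · exact ⟨le_refl l, hlpos⟩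
      · exact ⟨hlpos, le_refl 0⟩
  have hR : (if (i : ℕ) + 1 < N then r else 0) ≤ r ∧
      0 ≤ (if (i : ℕ) + 1 < N then r else 0) := by
    split_ifs
    · exact ⟨le_refl r, hrpos⟩
    · exact ⟨hrpos, le_refl 0⟩
  have hdlr : d + (l + r) = 0 := by
    rw [hd, hl, hr]
    field_simp
    ring
  linarith [hL.1, hL.2, hR.1, hR.2]

theorem kaw_key_pkg {m : Type*} [Fintype m] [DecidableEq m] (t al : ℝ)
    (ht : 0 ≤ t) (hal : 0 ≤ al)
    (w : m → ℝ) (hw : ∀ p, 0 ≤ w p) (K : Matrix m m ℝ)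
    (hKoff : ∀ p r, p ≠ r → 0 ≤ K p r) (hKrow : ∀ p, ∑ r, K p r ≤ 0) :
    IsUnit (1 - (t / 2) • (al • (Matrix.diagonal w * K))) ∧
    (∀ x : m → ℝ,
      (∀ p, 0 ≤ (1 - (t / 2) • (al • (Matrix.diagonal w * K))).mulVec x p) →
        ∀ p, 0 ≤ x p) ∧
    ∀ p r, 0 ≤ (1 - (t / 2) • (al • (Matrix.diagonal w * K)))⁻¹ p r := by
  set A := 1 - (t / 2) • (al • (Matrix.diagonal w * K)) with hA
  have hent : ∀ p r, A p r =
      (if p = r then (1 : ℝ) else 0) - t / 2 * (al * (w p * K p r)) := by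
    intro p r
    rw [hA]
    simp [Matrix.sub_apply, Matrix.smul_apply, Matrix.one_apply,
      Matrix.diagonal_mul, smul_eq_mul]
  apply kaw_mmatrix_pkg
  · intro p r hpr
    rw [hent, if_neg hpr]
    have h1 : 0 ≤ t / 2 * (al * (w p * K p r)) := by
      have := mul_nonneg (hw p) (hKoff p r hpr)
      have := mul_nonneg hal this
      have := mul_nonneg (by linarith : (0:ℝ) ≤ t / 2) this
      linarith
    linarith
  · intro p
    have hsum : ∑ r, A p r =
        1 - t / 2 * (al * (w p * ∑ r, K p r)) := by
      rw [Finset.sum_congr rfl fun r _ => hent p r, Finset.sum_sub_distrib]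
      congr 1
      · simp [Finset.sum_ite_eq]
      · rw [← Finset.mul_sum, ← Finset.mul_sum, ← Finset.mul_sum]
    rw [hsum]
    have h2 : t / 2 * (al * (w p * ∑ r, K p r)) ≤ 0 := by
      have h3 : w p * ∑ r, K p r ≤ 0 :=
        mul_nonpos_of_nonneg_of_nonpos (hw p) (hKrow p)
      have h4 : al * (w p * ∑ r, K p r) ≤ 0 :=
        mul_nonpos_of_nonneg_of_nonpos hal h3
      exact mul_nonpos_of_nonneg_of_nonpos (by linarith) h4
    linarith

theorem kaw_one_rowsum {n : ℕ} (j : Fin n) :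
    ∑ r, (1 : Matrix (Fin n) (Fin n) ℝ) j r = 1 := by
  simp [Matrix.one_apply]

/-- under the CFL condition, `I − (τ/2)M_σ` is nonsingular and monotone
(`(I − (τ/2)M_σ)x ≥ 0` entrywise implies `x ≥ 0` entrywise); equivalently its inverse
is entrywise nonnegative. -/
theorem statement3 (n1 n2 n3 : ℕ) (a b c q : ℝ)
    (ha : 0 < a) (hb : 0 < b) (hc : 0 < c) (hq0 : 0 ≤ q) (hq2 : q ≤ 2)
    (h1 h2 h3 : ℕ → ℝ)
    (hpos1 : ∀ j ≤ n1 + 2, 0 < h1 j)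
    (hpos2 : ∀ j ≤ n2 + 2, 0 < h2 j)
    (hpos3 : ∀ j ≤ n3 + 2, 0 < h3 j)
    (τ : ℝ) (hτ : 0 < τ) (hCFL : CFL (n1 + 2) (n2 + 2) (n3 + 2) a b c q h1 h2 h3 τ) :
    ∀ σ : Fin 3,
      IsUnit (1 - (τ / 2) • Mmat (n1 + 2) (n2 + 2) (n3 + 2) a b c q h1 h2 h3 σ) ∧
      (∀ x : Idx (n1 + 2) (n2 + 2) (n3 + 2) → ℝ,
        (∀ p, 0 ≤ (1 - (τ / 2) • Mmat (n1 + 2) (n2 + 2) (n3 + 2) a b c q h1 h2 h3 σ).mulVec x p) → ∀ p, 0 ≤ x p) ∧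
      ∀ p r, 0 ≤ (1 - (τ / 2) • Mmat (n1 + 2) (n2 + 2) (n3 + 2) a b c q h1 h2 h3 σ)⁻¹ p r := by
  have hτ' : (0:ℝ) ≤ τ := le_of_lt hτ
  have hone : ∀ {n : ℕ} (j k : Fin n), 0 ≤ (1 : Matrix (Fin n) (Fin n) ℝ) j k := by
    intro n j k
    rw [Matrix.one_apply]
    split_ifs <;> norm_num
  have hφ : ∀ p : Idx (n1+2) (n2+2) (n3+2),
      0 ≤ (phiVec (n1+2) (n2+2) (n3+2) a b c q h1 h2 h3 p)⁻¹ := by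
    intro p
    have hS : 0 < ∑ ℓ ∈ Finset.range ((p.2.2:ℕ)+1), h1 ℓ := by
      refine Finset.sum_pos (fun ℓ hℓ => hpos1 ℓ ?_) Finset.nonempty_range_add_one
      have h1ℓ := Finset.mem_range.mp hℓ
      have h2ℓ := p.2.2.2
      omega
    have hbase : 0 < a ^ 2 * (∑ ℓ ∈ Finset.range ((p.2.2:ℕ)+1), h1 ℓ) ^ 2 +
        b ^ 2 * (∑ ℓ ∈ Finset.range ((p.2.1:ℕ)+1), h2 ℓ) ^ 2 +
        c ^ 2 * (∑ ℓ ∈ Finset.range ((p.1:ℕ)+1), h3 ℓ) ^ 2 := by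
      have t1 : 0 < a ^ 2 * (∑ ℓ ∈ Finset.range ((p.2.2:ℕ)+1), h1 ℓ) ^ 2 :=
        mul_pos (pow_pos ha 2) (pow_pos hS 2)
      have t2 : 0 ≤ b ^ 2 * (∑ ℓ ∈ Finset.range ((p.2.1:ℕ)+1), h2 ℓ) ^ 2 := by positivity
      have t3 : 0 ≤ c ^ 2 * (∑ ℓ ∈ Finset.range ((p.1:ℕ)+1), h3 ℓ) ^ 2 := by positivity
      linarith
    have hφp : 0 < phiVec (n1+2) (n2+2) (n3+2) a b c q h1 h2 h3 p :=
      Real.rpow_pos_of_pos hbase _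
    exact le_of_lt (inv_pos.mpr hφp)
  -- σ = 0
  have H0 : IsUnit (1 - (τ / 2) • Mmat (n1 + 2) (n2 + 2) (n3 + 2) a b c q h1 h2 h3 0) ∧
      (∀ x : Idx (n1 + 2) (n2 + 2) (n3 + 2) → ℝ,
        (∀ p, 0 ≤ (1 - (τ / 2) • Mmat (n1 + 2) (n2 + 2) (n3 + 2) a b c q h1 h2 h3 0).mulVec x p) → ∀ p, 0 ≤ x p) ∧
      ∀ p r, 0 ≤ (1 - (τ / 2) • Mmat (n1 + 2) (n2 + 2) (n3 + 2) a b c q h1 h2 h3 0)⁻¹ p r := by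
    have hKoff : ∀ p r : Idx (n1+2) (n2+2) (n3+2), p ≠ r →
        0 ≤ ((1 : Matrix (Fin (n3+2)) (Fin (n3+2)) ℝ) ⊗ₖ
          ((1 : Matrix (Fin (n2+2)) (Fin (n2+2)) ℝ) ⊗ₖ tridiag (n1+2) h1)) p r := by
      intro p r hpr
      simp only [Matrix.kroneckerMap_apply]
      by_cases h3c : p.2.2 = r.2.2
      · by_cases hc1 : p.1 = r.1
        · by_cases hc2 : p.2.1 = r.2.1
          · exact absurd (Prod.ext hc1 (Prod.ext hc2 h3c)) hpr
          · simp [Matrix.one_apply_ne hc2]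
        · simp [Matrix.one_apply_ne hc1]
      · exact mul_nonneg (hone _ _) (mul_nonneg (hone _ _)
          (kaw_tridiag_offdiag_nonneg (n1+2) h1 hpos1 p.2.2 r.2.2 h3c))
    have hKrow : ∀ p : Idx (n1+2) (n2+2) (n3+2),
        ∑ r, ((1 : Matrix (Fin (n3+2)) (Fin (n3+2)) ℝ) ⊗ₖ
          ((1 : Matrix (Fin (n2+2)) (Fin (n2+2)) ℝ) ⊗ₖ tridiag (n1+2) h1)) p r ≤ 0 := by
      intro p
      have hs : ∑ r, ((1 : Matrix (Fin (n3+2)) (Fin (n3+2)) ℝ) ⊗ₖ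
          ((1 : Matrix (Fin (n2+2)) (Fin (n2+2)) ℝ) ⊗ₖ tridiag (n1+2) h1)) p r
          = ∑ r3, tridiag (n1+2) h1 p.2.2 r3 := by
        rw [Fintype.sum_prod_type]
        simp [Fintype.sum_prod_type, Matrix.kroneckerMap_apply, Matrix.one_apply,
          ite_mul, mul_ite, zero_mul, mul_zero, one_mul, mul_one, Finset.sum_ite_eq]
      rw [hs]
      exact kaw_tridiag_rowsum_nonpos _ _ hpos1 p.2.2
    exact kaw_key_pkg τ ((a^2)⁻¹) hτ' (by positivity) _ hφ _ hKoff hKrow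
  -- σ = 1
  have H1 : IsUnit (1 - (τ / 2) • Mmat (n1 + 2) (n2 + 2) (n3 + 2) a b c q h1 h2 h3 1) ∧
      (∀ x : Idx (n1 + 2) (n2 + 2) (n3 + 2) → ℝ,
        (∀ p, 0 ≤ (1 - (τ / 2) • Mmat (n1 + 2) (n2 + 2) (n3 + 2) a b c q h1 h2 h3 1).mulVec x p) → ∀ p, 0 ≤ x p) ∧
      ∀ p r, 0 ≤ (1 - (τ / 2) • Mmat (n1 + 2) (n2 + 2) (n3 + 2) a b c q h1 h2 h3 1)⁻¹ p r := by
    have hKoff : ∀ p r : Idx (n1+2) (n2+2) (n3+2), p ≠ r →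
        0 ≤ ((1 : Matrix (Fin (n3+2)) (Fin (n3+2)) ℝ) ⊗ₖ
          (tridiag (n2+2) h2 ⊗ₖ (1 : Matrix (Fin (n1+2)) (Fin (n1+2)) ℝ))) p r := by
      intro p r hpr
      simp only [Matrix.kroneckerMap_apply]
      by_cases h2c : p.2.1 = r.2.1
      · by_cases hc1 : p.1 = r.1
        · by_cases hc3 : p.2.2 = r.2.2
          · exact absurd (Prod.ext hc1 (Prod.ext h2c hc3)) hpr
          · simp [Matrix.one_apply_ne hc3]
        · simp [Matrix.one_apply_ne hc1]
      · exact mul_nonneg (hone _ _) (mul_nonneg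
          (kaw_tridiag_offdiag_nonneg (n2+2) h2 hpos2 p.2.1 r.2.1 h2c) (hone _ _))
    have hKrow : ∀ p : Idx (n1+2) (n2+2) (n3+2),
        ∑ r, ((1 : Matrix (Fin (n3+2)) (Fin (n3+2)) ℝ) ⊗ₖ
          (tridiag (n2+2) h2 ⊗ₖ (1 : Matrix (Fin (n1+2)) (Fin (n1+2)) ℝ))) p r ≤ 0 := by
      intro p
      have hs : ∑ r, ((1 : Matrix (Fin (n3+2)) (Fin (n3+2)) ℝ) ⊗ₖ
          (tridiag (n2+2) h2 ⊗ₖ (1 : Matrix (Fin (n1+2)) (Fin (n1+2)) ℝ))) p r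
          = ∑ r2, tridiag (n2+2) h2 p.2.1 r2 := by
        rw [Fintype.sum_prod_type]
        simp [Fintype.sum_prod_type, Matrix.kroneckerMap_apply, Matrix.one_apply,
          ite_mul, mul_ite, zero_mul, mul_zero, one_mul, mul_one, Finset.sum_ite_eq]
      rw [hs]
      exact kaw_tridiag_rowsum_nonpos _ _ hpos2 p.2.1
    exact kaw_key_pkg τ ((b^2)⁻¹) hτ' (by positivity) _ hφ _ hKoff hKrow
  -- σ = 2
  have H2 : IsUnit (1 - (τ / 2) • Mmat (n1 + 2) (n2 + 2) (n3 + 2) a b c q h1 h2 h3 2) ∧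
      (∀ x : Idx (n1 + 2) (n2 + 2) (n3 + 2) → ℝ,
        (∀ p, 0 ≤ (1 - (τ / 2) • Mmat (n1 + 2) (n2 + 2) (n3 + 2) a b c q h1 h2 h3 2).mulVec x p) → ∀ p, 0 ≤ x p) ∧
      ∀ p r, 0 ≤ (1 - (τ / 2) • Mmat (n1 + 2) (n2 + 2) (n3 + 2) a b c q h1 h2 h3 2)⁻¹ p r := by
    have hKoff : ∀ p r : Idx (n1+2) (n2+2) (n3+2), p ≠ r →
        0 ≤ (tridiag (n3+2) h3 ⊗ₖ
          ((1 : Matrix (Fin (n2+2)) (Fin (n2+2)) ℝ) ⊗ₖ (1 : Matrix (Fin (n1+2)) (Fin (n1+2)) ℝ))) p r := by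
      intro p r hpr
      simp only [Matrix.kroneckerMap_apply]
      by_cases h1c : p.1 = r.1
      · by_cases hc2 : p.2.1 = r.2.1
        · by_cases hc3 : p.2.2 = r.2.2
          · exact absurd (Prod.ext h1c (Prod.ext hc2 hc3)) hpr
          · simp [Matrix.one_apply_ne hc3]
        · simp [Matrix.one_apply_ne hc2]
      · exact mul_nonneg
          (kaw_tridiag_offdiag_nonneg (n3+2) h3 hpos3 p.1 r.1 h1c)
          (mul_nonneg (hone _ _) (hone _ _))
    have hKrow : ∀ p : Idx (n1+2) (n2+2) (n3+2),
        ∑ r, (tridiag (n3+2) h3 ⊗ₖ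
          ((1 : Matrix (Fin (n2+2)) (Fin (n2+2)) ℝ) ⊗ₖ (1 : Matrix (Fin (n1+2)) (Fin (n1+2)) ℝ))) p r ≤ 0 := by
      intro p
      have hs : ∑ r, (tridiag (n3+2) h3 ⊗ₖ
          ((1 : Matrix (Fin (n2+2)) (Fin (n2+2)) ℝ) ⊗ₖ (1 : Matrix (Fin (n1+2)) (Fin (n1+2)) ℝ))) p r
          = ∑ r1, tridiag (n3+2) h3 p.1 r1 := by
        rw [Fintype.sum_prod_type]
        simp [Fintype.sum_prod_type, Matrix.kroneckerMap_apply, Matrix.one_apply,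
          ite_mul, mul_ite, zero_mul, mul_zero, one_mul, mul_one, Finset.sum_ite_eq]
      rw [hs]
      exact kaw_tridiag_rowsum_nonpos _ _ hpos3 p.1
    exact kaw_key_pkg τ ((c^2)⁻¹) hτ' (by positivity) _ hφ _ hKoff hKrow
  intro σ
  fin_cases σ
  · exact H0
  · exact H1
  · exact H2

end Kawarada
end
end

section
/- Let M be a real n × n matrix and K ∈ ℝ with μ(M) ≤ K. Then there exist constants c > 0 and τ̄ > 0 such that for every τ with 0 < τ < τ̄, the matrix I − (τ/2)M is invertible and ‖(I − (τ/2)M)^{−1}(I + (τ/2)M)‖₂ ≤ 1 + τK + cτ². -/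
open Matrix
open scoped Kronecker

noncomputable section

namespace Kawarada

open scoped RealInnerProductSpace in
/-- Rayleigh-type bound: the quadratic form of the symmetric part is at most
`logNorm M` times the squared norm. -/
theorem rayleigh_aux (n : ℕ) (M : Matrix (Fin n) (Fin n) ℝ)
    (x : EuclideanSpace ℝ (Fin n)) :
    ⟪x, Matrix.toEuclideanLin ((2:ℝ)⁻¹ • (M + Mᵀ)) x⟫ ≤ logNorm M * ‖x‖ ^ 2 := by
  set S : Matrix (Fin n) (Fin n) ℝ := (2:ℝ)⁻¹ • (M + Mᵀ) with hSdef
  have hS := isHermitian_symPart M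
  set b := hS.eigenvectorBasis with hb
  set lam := hS.eigenvalues with hlam
  have hsym : (Matrix.toEuclideanLin S).IsSymmetric :=
    (Matrix.isHermitian_iff_isSymmetric).1 hS
  have hrepr : ∀ i, b.repr (Matrix.toEuclideanLin S x) i = lam i * b.repr x i := by
    intro i
    rw [b.repr_apply_apply, ← hsym (b i) x]
    have hmv : Matrix.toEuclideanLin S (b i) = lam i • (b i) :=
      congrArg (WithLp.equiv 2 (Fin n → ℝ)).symm (hS.mulVec_eigenvectorBasis i)
    rw [hmv, real_inner_smul_left, b.repr_apply_apply]
  have hin : ⟪x, Matrix.toEuclideanLin S x⟫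
      = ∑ i, (b.repr x i) * (lam i * b.repr x i) := by
    rw [← b.repr.inner_map_map x (Matrix.toEuclideanLin S x)]
    simp only [PiLp.inner_apply, RCLike.inner_apply, starRingEnd_apply, star_trivial]
    exact Finset.sum_congr rfl fun i _ => by rw [hrepr i]; ring
  have hnorm : ‖x‖ ^ 2 = ∑ i, (b.repr x i) ^ 2 := by
    rw [← real_inner_self_eq_norm_sq, ← b.repr.inner_map_map x x]
    simp only [PiLp.inner_apply, RCLike.inner_apply, starRingEnd_apply, star_trivial]
    exact Finset.sum_congr rfl fun i _ => (sq _).symm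
  have hle : ∀ i : Fin n, lam i ≤ logNorm M := fun i =>
    le_ciSup (Set.Finite.bddAbove (Set.finite_range _)) i
  calc ⟪x, Matrix.toEuclideanLin S x⟫ = ∑ i, (b.repr x i) * (lam i * b.repr x i) := hin
    _ ≤ ∑ i, logNorm M * (b.repr x i) ^ 2 := by
        apply Finset.sum_le_sum
        intro i _
        have : (b.repr x i) * (lam i * b.repr x i) = lam i * (b.repr x i) ^ 2 := by ring
        rw [this]
        exact mul_le_mul_of_nonneg_right (hle i) (sq_nonneg _)
    _ = logNorm M * ‖x‖ ^ 2 := by rw [hnorm, Finset.mul_sum]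

open scoped RealInnerProductSpace in
theorem inner_symPart_aux (n : ℕ) (M : Matrix (Fin n) (Fin n) ℝ)
    (x : EuclideanSpace ℝ (Fin n)) :
    ⟪x, Matrix.toEuclideanLin M x⟫ = ⟪x, Matrix.toEuclideanLin ((2:ℝ)⁻¹ • (M + Mᵀ)) x⟫ := by
  have hT : Matrix.toEuclideanLin (Mᵀ) = LinearMap.adjoint (Matrix.toEuclideanLin M) := by
    have := Matrix.toEuclideanLin_conjTranspose_eq_adjoint M
    rw [Matrix.conjTranspose_eq_transpose_of_trivial] at this
    exact this
  have h1 : ⟪x, Matrix.toEuclideanLin Mᵀ x⟫ = ⟪x, Matrix.toEuclideanLin M x⟫ := by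
    rw [hT, LinearMap.adjoint_inner_right]
    exact real_inner_comm _ _
  rw [_root_.map_smul, _root_.map_add, LinearMap.smul_apply, LinearMap.add_apply,
    inner_smul_right, inner_add_right, h1]
  ring

set_option maxHeartbeats 1000000 in
lemma scalar_key (τ K r a c p d cc : ℝ)
    (hτ : 0 < τ) (ha : 0 ≤ a) (hc : 0 ≤ c) (hr : 0 ≤ r)
    (hd : d = τ/2 * r) (hd2 : d ≤ 1/2)
    (hp : p ≤ K * a^2)
    (hlow : a - d*a ≤ c) (hhigh : c ≤ a + d*a)
    (hτK : τ * |K| ≤ 1/2)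
    (hcc : cc = 8*(r+1)*(|K|+1)+1) :
    c^2 + 2*τ*p ≤ (1 + τ*K + cc*τ^2)^2 * c^2 := by
  have hd0 : 0 ≤ d := by rw [hd]; positivity
  have hKabs : K ≤ |K| := le_abs_self K
  have hKabs' : -|K| ≤ K := neg_abs_le K
  have habs0 : 0 ≤ |K| := abs_nonneg K
  have hcc0 : (0:ℝ) ≤ cc := by rw [hcc]; nlinarith
  have hmain : c^2 + 2*τ*p ≤ c^2 * (1 + 2*τ*K + cc*τ^2) := by
    rcases le_or_gt 0 K with hK | hK
    · have h0 : (0:ℝ) ≤ a - d*a := by nlinarith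
      have step1 : (a-d*a)^2 ≤ c^2 := by
        have := mul_self_le_mul_self h0 hlow; nlinarith [this]
      have t2 : 1 ≤ (1-d)^2*(1+8*d) := by
        nlinarith [mul_nonneg hd0 hd0, mul_nonneg (mul_nonneg hd0 hd0) hd0]
      have step2 : a^2 ≤ c^2*(1+8*d) := by
        have u1 := mul_le_mul_of_nonneg_left t2 (sq_nonneg a)
        have u3 := mul_le_mul_of_nonneg_right step1 (by linarith : (0:ℝ) ≤ 1+8*d)
        nlinarith [u1, u3]
      have hp2 : 2*τ*p ≤ 2*τ*K*a^2 := by nlinarith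
      have hp3 : 2*τ*K*a^2 ≤ 2*τ*K*(c^2*(1+8*d)) :=
        mul_le_mul_of_nonneg_left step2 (by nlinarith)
      have hKr : 8*K*r ≤ cc := by rw [hcc]; nlinarith
      have hfin : 2*τ*K*(c^2*(1+8*d)) ≤ c^2*(2*τ*K + cc*τ^2) := by
        have := mul_le_mul_of_nonneg_right hKr (by positivity : (0:ℝ) ≤ τ^2*c^2)
        rw [hd]; nlinarith [this]
      linarith
    · have step1 : c*c ≤ (a+d*a)*(a+d*a) := mul_self_le_mul_self hc hhigh
      have t2 : (1+d)^2*(1-2*d) ≤ 1 := by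
        nlinarith [mul_nonneg hd0 hd0, mul_nonneg (mul_nonneg hd0 hd0) hd0]
      have step2 : c^2 * (1-2*d) ≤ a^2 := by
        have u1 := mul_le_mul_of_nonneg_right step1 (by linarith : (0:ℝ) ≤ 1-2*d)
        have u2 := mul_le_mul_of_nonneg_left t2 (sq_nonneg a)
        nlinarith [u1, u2]
      have hp2 : 2*τ*p ≤ 2*τ*K*a^2 := by nlinarith
      have hp3 : 2*τ*K*a^2 ≤ 2*τ*K*(c^2*(1-2*d)) := by
        have := mul_le_mul_of_nonneg_left step2 (by nlinarith : (0:ℝ) ≤ -(2*τ*K))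
        nlinarith [this]
      have hKr : -(2*K)*r ≤ cc := by rw [hcc]; nlinarith
      have hfin : 2*τ*K*(c^2*(1-2*d)) ≤ c^2*(2*τ*K + cc*τ^2) := by
        have := mul_le_mul_of_nonneg_right hKr (by positivity : (0:ℝ) ≤ τ^2*c^2)
        rw [hd]; nlinarith [this]
      linarith
  have h1 : (0:ℝ) ≤ 1+2*τ*K := by nlinarith [mul_le_mul_of_nonneg_left hKabs' hτ.le]
  have hsq : 1 + 2*τ*K + cc*τ^2 ≤ (1 + τ*K + cc*τ^2)^2 := by
    nlinarith [sq_nonneg (τ*K), sq_nonneg (cc*τ^2),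
      mul_nonneg (mul_nonneg hcc0 (sq_nonneg τ)) h1, mul_pos hτ hτ, hcc]
  nlinarith [hmain, mul_le_mul_of_nonneg_left hsq (sq_nonneg c)]


set_option maxHeartbeats 2000000 in
/-- if `μ(M) ≤ K` then for all sufficiently small `τ > 0`,
`I − (τ/2)M` is invertible and
`‖(I − (τ/2)M)⁻¹(I + (τ/2)M)‖₂ ≤ 1 + τK + cτ²`. -/
theorem statement12 (n : ℕ) (M : Matrix (Fin n) (Fin n) ℝ) (K : ℝ)
    (hμ : logNorm M ≤ K) :
    ∃ cc > (0 : ℝ), ∃ τbar > (0 : ℝ), ∀ τ : ℝ, 0 < τ → τ < τbar →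
      IsUnit (1 - (τ / 2) • M) ∧
      specNorm ((1 - (τ / 2) • M)⁻¹ * (1 + (τ / 2) • M)) ≤ 1 + τ * K + cc * τ ^ 2 := by
  classical
  set e := Matrix.toEuclideanCLM (n := Fin n) (𝕜 := ℝ) with he
  set T : EuclideanSpace ℝ (Fin n) →L[ℝ] EuclideanSpace ℝ (Fin n) := e M with hTdef
  set r : ℝ := ‖T‖ with hrdef
  have hr0 : 0 ≤ r := norm_nonneg _
  have habs0 : 0 ≤ |K| := abs_nonneg K
  have hspec : ∀ A : Matrix (Fin n) (Fin n) ℝ, specNorm A = ‖e A‖ := by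
    intro A
    unfold specNorm
    congr 1
  have hKx : ∀ x : EuclideanSpace ℝ (Fin n),
      inner (𝕜 := ℝ) x (T x) ≤ K * ‖x‖ ^ 2 := by
    intro x
    have h0 : T x = Matrix.toEuclideanLin M x := by
      rw [hTdef, ← Matrix.coe_toEuclideanCLM_eq_toEuclideanLin]; rfl
    rw [h0, inner_symPart_aux]
    calc _ ≤ logNorm M * ‖x‖ ^ 2 := rayleigh_aux n M x
      _ ≤ K * ‖x‖ ^ 2 := mul_le_mul_of_nonneg_right hμ (sq_nonneg _)
  refine ⟨8*(r+1)*(|K|+1)+1, by nlinarith, min (1/(r+1)) (1/(2*(|K|+1))),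
    lt_min (by positivity) (by positivity), ?_⟩
  intro τ hτ0 hτb
  set cc : ℝ := 8*(r+1)*(|K|+1)+1 with hccdef
  obtain ⟨hτb1, hτb2⟩ := lt_min_iff.1 hτb
  have hτr : τ * (r+1) < 1 := by
    rw [lt_div_iff₀ (by positivity : (0:ℝ) < r+1)] at hτb1
    linarith
  have hτK : τ * |K| ≤ 1/2 := by
    rw [lt_div_iff₀ (by positivity : (0:ℝ) < 2*(|K|+1))] at hτb2
    nlinarith
  set t : EuclideanSpace ℝ (Fin n) →L[ℝ] EuclideanSpace ℝ (Fin n) := (τ/2) • T with htdef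
  have hd : ‖t‖ = τ/2 * r := by
    have h := norm_smul (α := ℝ) (τ/2) T
    rw [Real.norm_eq_abs, abs_of_pos (by linarith : (0:ℝ) < τ/2)] at h
    rw [htdef]
    exact h
  have hd2 : ‖t‖ ≤ 1/2 := by rw [hd]; nlinarith
  have hlt : ‖t‖ < 1 := lt_of_le_of_lt hd2 (by norm_num)
  set v : (EuclideanSpace ℝ (Fin n) →L[ℝ] EuclideanSpace ℝ (Fin n))ˣ :=
    Units.oneSub t hlt with hvdef
  have hv : (↑v : EuclideanSpace ℝ (Fin n) →L[ℝ] EuclideanSpace ℝ (Fin n)) = 1 - t := rfl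
  have hem : e (1 - (τ / 2) • M) = 1 - t := by
    rw [_root_.map_sub, _root_.map_one, _root_.map_smul, htdef, hTdef]
  have hUnitM : IsUnit (1 - (τ / 2) • M) := by
    have h1 : IsUnit (e (1 - (τ / 2) • M)) := by
      rw [hem]; exact v.isUnit
    have h2 := h1.map e.symm
    rwa [StarAlgEquiv.symm_apply_apply] at h2
  refine ⟨hUnitM, ?_⟩
  have hdet : IsUnit (1 - (τ / 2) • M).det := (Matrix.isUnit_iff_isUnit_det _).1 hUnitM
  have hinv : e ((1 - (τ / 2) • M)⁻¹) = ↑v⁻¹ := by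
    have h2 : e ((1 - (τ / 2) • M)⁻¹) * ↑v = 1 := by
      rw [hv, ← hem, ← _root_.map_mul, Matrix.nonsing_inv_mul _ hdet, _root_.map_one]
    calc e ((1 - (τ / 2) • M)⁻¹)
        = e ((1 - (τ / 2) • M)⁻¹) * (↑v * ↑v⁻¹) := by rw [Units.mul_inv, mul_one]
      _ = (e ((1 - (τ / 2) • M)⁻¹) * ↑v) * ↑v⁻¹ := by rw [mul_assoc]
      _ = ↑v⁻¹ := by rw [h2, one_mul]
  have hplus : e (1 + (τ / 2) • M) = 1 + t := by
    rw [_root_.map_add, _root_.map_one, _root_.map_smul, htdef, hTdef]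
  rw [hspec, _root_.map_mul, hinv, hplus]
  -- commutation
  have hc : Commute ((1:EuclideanSpace ℝ (Fin n) →L[ℝ] EuclideanSpace ℝ (Fin n)) - t) (1 + t) :=
    (Commute.one_left _).sub_left ((Commute.one_right t).add_right (Commute.refl t))
  have hc2 : Commute (↑v : EuclideanSpace ℝ (Fin n) →L[ℝ] EuclideanSpace ℝ (Fin n)) (1 + t) := by
    rw [hv]; exact hc
  have hc3 : Commute (↑v⁻¹ : EuclideanSpace ℝ (Fin n) →L[ℝ] EuclideanSpace ℝ (Fin n)) (1 + t) :=
    hc2.units_inv_left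
  have hcc0 : (0:ℝ) ≤ cc := by rw [hccdef]; nlinarith
  have hC0 : 0 ≤ 1 + τ * K + cc * τ ^ 2 := by
    nlinarith [mul_le_mul_of_nonneg_left (neg_abs_le K) hτ0.le,
      mul_nonneg hcc0 (sq_nonneg τ)]
  apply ContinuousLinearMap.opNorm_le_bound _ hC0
  intro z
  set x : EuclideanSpace ℝ (Fin n) := (↑v⁻¹ : _ →L[ℝ] _) z with hx
  have happ : ((↑v⁻¹ : EuclideanSpace ℝ (Fin n) →L[ℝ] EuclideanSpace ℝ (Fin n)) * (1 + t)) z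
      = (1 + t) x := by
    rw [hc3.eq]; rfl
  have hvx : (↑v : EuclideanSpace ℝ (Fin n) →L[ℝ] EuclideanSpace ℝ (Fin n)) x = z := by
    have : ((↑v * ↑v⁻¹ : EuclideanSpace ℝ (Fin n) →L[ℝ] EuclideanSpace ℝ (Fin n))) z = z := by
      rw [Units.mul_inv]; rfl
    exact this
  have hzx : x - t x = z := by
    rw [← hvx, hv]; rfl
  have e1 : ‖x + t x‖^2 = ‖x‖^2 + 2*((τ/2) * inner (𝕜 := ℝ) x (T x)) + ‖t x‖^2 := by
    have htx : t x = (τ/2) • (T x) := rfl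
    rw [htx, norm_add_sq_real, real_inner_smul_right]
  have e2 : ‖x - t x‖^2 = ‖x‖^2 - 2*((τ/2) * inner (𝕜 := ℝ) x (T x)) + ‖t x‖^2 := by
    have htx : t x = (τ/2) • (T x) := rfl
    rw [htx, norm_sub_sq_real, real_inner_smul_right]
  have hlow : ‖x‖ - ‖t‖ * ‖x‖ ≤ ‖z‖ := by
    have h1 : ‖x‖ - ‖t x‖ ≤ ‖x - t x‖ := norm_sub_norm_le _ _
    have h2 : ‖t x‖ ≤ ‖t‖ * ‖x‖ := t.le_opNorm x
    rw [hzx] at h1; linarith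
  have hhigh : ‖z‖ ≤ ‖x‖ + ‖t‖ * ‖x‖ := by
    have h1 : ‖x - t x‖ ≤ ‖x‖ + ‖t x‖ := norm_sub_le _ _
    have h2 : ‖t x‖ ≤ ‖t‖ * ‖x‖ := t.le_opNorm x
    rw [hzx] at h1; linarith
  have key := scalar_key τ K r ‖x‖ ‖z‖ (inner (𝕜 := ℝ) x (T x)) ‖t‖ cc hτ0
    (norm_nonneg x) (norm_nonneg z) hr0 hd hd2 (hKx x) hlow hhigh hτK hccdef
  have hsq : ‖(1 + t) x‖^2 ≤ (1 + τ*K + cc*τ^2)^2 * ‖z‖^2 := by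
    have hplusx : (1 + t) x = x + t x := rfl
    have hz2 : ‖z‖^2 = ‖x‖^2 - 2*((τ/2) * inner (𝕜 := ℝ) x (T x)) + ‖t x‖^2 := by
      rw [← hzx]; exact e2
    rw [hplusx, e1]
    rw [hz2] at key ⊢
    linarith [key]
  rw [happ]
  nlinarith [hsq, norm_nonneg ((1 + t) x), norm_nonneg z, mul_nonneg hC0 (norm_nonneg z)]

end Kawarada
end
end
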